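/- arXiv:1711.03358 — 2 statements merged into one kernel-verified Lean document; each statement's English description precedes it below -/
import Mathlib

section
/- Let P_1,...,P_m : ℝ → (ℕ → ℝ) be families of sub-probability sequences (for each t, P_i(t)_k ≥ 0 and sum_k P_i(t)_k ≤ 1), and suppose each function t ↦ P_i(t)_j is Lipschitz with constant L(j), uniformly in i. Fix k and let L = max_{j ≤ k} L(j). Then for all x and h_1,...,h_m ≤ x, |(P_1(x-h_1) * ... * P_m(x-h_m))_k − (P_1(x-h_1) * P_2(x-h_1) * ... * P_m(x-h_1))_k| ≤ L · sum_{j=2}^m |h_1 − h_j|, where * denotes convolution of sequences: (a*b)_k = sum_{l=0}^k a_l b_{k-l}. -/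
open Finset

/-- Auxiliary: the sum over antidiagonal tuples of a product omitting one slot
of nonnegative sequences with partial sums at most 1 is at most 1. -/
lemma conv_aux_sum_le_one {m k : ℕ} (i0 : Fin m) (Q : Fin m → ℕ → ℝ)
    (hnn : ∀ j x, 0 ≤ Q j x)
    (hs : ∀ j, ∑ x ∈ Finset.range (k + 1), Q j x ≤ 1) :
    ∑ v ∈ Finset.Nat.antidiagonalTuple m k, ∏ j ∈ Finset.univ.erase i0, Q j (v j) ≤ 1 := by
  classical
  set R : Fin m → ℕ → ℝ := fun j x => if j = i0 then 1 else Q j x with hR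
  have hRnn : ∀ j x, 0 ≤ R j x := by
    intro j x; simp only [hR]; split <;> [norm_num; exact hnn _ _]
  set f : (Fin m → ℕ) → (Fin m → ℕ) := fun v => Function.update v i0 0 with hf
  set g : (Fin m → ℕ) → ℝ := fun w => ∏ j, R j (w j) with hg
  have hgnn : ∀ w, 0 ≤ g w := fun w => Finset.prod_nonneg fun j _ => hRnn _ _
  have key : ∀ v : Fin m → ℕ, ∏ j ∈ Finset.univ.erase i0, Q j (v j) = g (f v) := by
    intro v
    show _ = ∏ j, R j (f v j)
    rw [← Finset.mul_prod_erase Finset.univ _ (Finset.mem_univ i0)]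
    have h1 : R i0 (f v i0) = 1 := by simp [hR]
    rw [h1, one_mul]
    refine Finset.prod_congr rfl fun j hj => ?_
    have hji : j ≠ i0 := (Finset.mem_erase.1 hj).1
    simp [hR, hf, hji, Function.update_of_ne hji]
  have hinj : Set.InjOn f (Finset.Nat.antidiagonalTuple m k : Set (Fin m → ℕ)) := by
    intro v hv w hw hvw
    have hv' : ∑ i, v i = k := (Finset.Nat.mem_antidiagonalTuple).1 hv
    have hw' : ∑ i, w i = k := (Finset.Nat.mem_antidiagonalTuple).1 hw
    have hoff : ∀ j, j ≠ i0 → v j = w j := by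
      intro j hj
      have := congrFun hvw j
      simpa [hf, Function.update_of_ne hj] using this
    funext j
    by_cases hj : j = i0
    · subst hj
      have hsum : ∑ i ∈ Finset.univ.erase j, v i = ∑ i ∈ Finset.univ.erase j, w i :=
        Finset.sum_congr rfl fun i hi => hoff i (Finset.mem_erase.1 hi).1
      have hv'' : v j + ∑ i ∈ Finset.univ.erase j, v i = k := by
        rw [Finset.add_sum_erase _ _ (Finset.mem_univ j)]; exact hv'
      have hw'' : w j + ∑ i ∈ Finset.univ.erase j, w i = k := by
        rw [Finset.add_sum_erase _ _ (Finset.mem_univ j)]; exact hw'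
      omega
    · exact hoff j hj
  set t : Fin m → Finset ℕ := fun j => if j = i0 then {0} else Finset.range (k + 1) with ht
  have himg : (Finset.Nat.antidiagonalTuple m k).image f ⊆ Fintype.piFinset t := by
    intro w hw
    rcases Finset.mem_image.1 hw with ⟨v, hv, rfl⟩
    have hv' : ∑ i, v i = k := (Finset.Nat.mem_antidiagonalTuple).1 hv
    refine Fintype.mem_piFinset.2 fun j => ?_
    by_cases hj : j = i0
    · subst hj; simp [ht, hf]
    · have : v j ≤ k := hv' ▸ Finset.single_le_sum (fun i _ => Nat.zero_le (v i)) (Finset.mem_univ j)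
      simp [ht, hj, hf, Function.update_of_ne hj, Nat.lt_succ_of_le this]
  calc ∑ v ∈ Finset.Nat.antidiagonalTuple m k, ∏ j ∈ Finset.univ.erase i0, Q j (v j)
      = ∑ v ∈ Finset.Nat.antidiagonalTuple m k, g (f v) :=
        Finset.sum_congr rfl fun v _ => key v
    _ = ∑ w ∈ (Finset.Nat.antidiagonalTuple m k).image f, g w :=
        (Finset.sum_image fun v hv w hw hvw => hinj hv hw hvw).symm
    _ ≤ ∑ w ∈ Fintype.piFinset t, g w :=
        Finset.sum_le_sum_of_subset_of_nonneg himg fun w _ _ => hgnn w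
    _ = ∏ j, ∑ x ∈ t j, R j x := (Finset.prod_univ_sum t R).symm
    _ ≤ 1 := by
        refine Finset.prod_le_one (fun j _ => Finset.sum_nonneg fun x _ => hRnn _ _) ?_
        intro j _
        by_cases hj : j = i0
        · subst hj; simp [ht, hR]
        · simp only [ht, hR, if_neg hj]
          exact hs j

/-- Difference-in-times lemma: convolving `m` Lipschitz sub-probability sequences
evaluated at shifted times versus all at the same time `x - h 0`. -/
theorem conv_time_difference (m : ℕ) (hm : 0 < m)
    (P : Fin m → ℝ → ℕ → ℝ) (L : ℕ → ℝ)
    (hnn : ∀ i t j, 0 ≤ P i t j)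
    (hsummable : ∀ i t, Summable (fun j => P i t j))
    (hsub : ∀ i t, ∑' j, P i t j ≤ 1)
    (hLip : ∀ i j s t, |P i s j - P i t j| ≤ L j * |s - t|)
    (k : ℕ) (x : ℝ) (h : Fin m → ℝ) (hh : ∀ i, h i ≤ x) :
    |(∑ v ∈ Finset.Nat.antidiagonalTuple m k, ∏ i, P i (x - h i) (v i)) -
        ∑ v ∈ Finset.Nat.antidiagonalTuple m k, ∏ i, P i (x - h ⟨0, hm⟩) (v i)| ≤
      ((Finset.range (k + 1)).sup' (by simp) L) *
        ∑ i ∈ Finset.univ.erase (⟨0, hm⟩ : Fin m), |h ⟨0, hm⟩ - h i| := by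
  classical
  set i0 : Fin m := ⟨0, hm⟩ with hi0
  set Lmax : ℝ := (Finset.range (k + 1)).sup' (by simp) L with hLmax
  have hLle : ∀ j ≤ k, L j ≤ Lmax :=
    fun j hj => Finset.le_sup' L (Finset.mem_range.2 (Nat.lt_succ_of_le hj))
  have hL0 : 0 ≤ L 0 := by
    have h1 := hLip i0 0 0 1
    have h2 := (abs_nonneg (P i0 0 0 - P i0 1 0)).trans h1
    simpa using h2
  have hLmax0 : 0 ≤ Lmax := hL0.trans (hLle 0 k.zero_le)
  have hpart : ∀ i t, ∑ x ∈ Finset.range (k + 1), P i t x ≤ 1 := fun i t =>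
    le_trans (Summable.sum_le_tsum _ (fun j _ => hnn i t j) (hsummable i t)) (hsub i t)
  set s0 : ℝ := x - h i0 with hs0
  set T : Finset (Fin m) → ℝ := fun S =>
    ∑ v ∈ Finset.Nat.antidiagonalTuple m k,
      ∏ i, P i (if i ∈ S then s0 else x - h i) (v i) with hT
  -- one-step bound
  have hstep : ∀ (i : Fin m) (S : Finset (Fin m)), i ∉ S →
      |T (insert i S) - T S| ≤ Lmax * |h i0 - h i| := by
    intro i S hiS
    have hdiff : T (insert i S) - T S =
        ∑ v ∈ Finset.Nat.antidiagonalTuple m k,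
          (∏ j ∈ Finset.univ.erase i, P j (if j ∈ S then s0 else x - h j) (v j)) *
            (P i s0 (v i) - P i (x - h i) (v i)) := by
      rw [hT, ← Finset.sum_sub_distrib]
      refine Finset.sum_congr rfl fun v _ => ?_
      rw [← Finset.mul_prod_erase Finset.univ _ (Finset.mem_univ i),
          ← Finset.mul_prod_erase Finset.univ
            (fun j => P j (if j ∈ S then s0 else x - h j) (v j)) (Finset.mem_univ i)]
      have hins : ∀ j ∈ Finset.univ.erase i,
          P j (if j ∈ insert i S then s0 else x - h j) (v j) =
          P j (if j ∈ S then s0 else x - h j) (v j) := by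
        intro j hj
        have hji : j ≠ i := (Finset.mem_erase.1 hj).1
        simp [Finset.mem_insert, hji]
      rw [Finset.prod_congr rfl hins]
      simp only [Finset.mem_insert_self, if_pos, if_neg hiS]
      ring
    rw [hdiff]
    calc |∑ v ∈ Finset.Nat.antidiagonalTuple m k,
          (∏ j ∈ Finset.univ.erase i, P j (if j ∈ S then s0 else x - h j) (v j)) *
            (P i s0 (v i) - P i (x - h i) (v i))|
        ≤ ∑ v ∈ Finset.Nat.antidiagonalTuple m k,
            |(∏ j ∈ Finset.univ.erase i, P j (if j ∈ S then s0 else x - h j) (v j)) *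
              (P i s0 (v i) - P i (x - h i) (v i))| := Finset.abs_sum_le_sum_abs _ _
      _ ≤ ∑ v ∈ Finset.Nat.antidiagonalTuple m k,
            (∏ j ∈ Finset.univ.erase i, P j (if j ∈ S then s0 else x - h j) (v j)) *
              (Lmax * |h i0 - h i|) := by
          refine Finset.sum_le_sum fun v hv => ?_
          rw [abs_mul]
          have hprodnn : 0 ≤ ∏ j ∈ Finset.univ.erase i,
              P j (if j ∈ S then s0 else x - h j) (v j) :=
            Finset.prod_nonneg fun j _ => hnn _ _ _
          rw [abs_of_nonneg hprodnn]
          refine mul_le_mul_of_nonneg_left ?_ hprodnn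
          have hvk : v i ≤ k := by
            have hv' : ∑ j, v j = k := (Finset.Nat.mem_antidiagonalTuple).1 hv
            exact hv' ▸ Finset.single_le_sum (fun j _ => Nat.zero_le (v j)) (Finset.mem_univ i)
          calc |P i s0 (v i) - P i (x - h i) (v i)| ≤ L (v i) * |s0 - (x - h i)| :=
                hLip i (v i) s0 (x - h i)
            _ ≤ Lmax * |h i0 - h i| := by
                have : |s0 - (x - h i)| = |h i0 - h i| := by
                  rw [hs0]; rw [abs_sub_comm]; ring_nf
                rw [this]
                exact mul_le_mul_of_nonneg_right (hLle _ hvk) (abs_nonneg _)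
      _ = (∑ v ∈ Finset.Nat.antidiagonalTuple m k,
            ∏ j ∈ Finset.univ.erase i, P j (if j ∈ S then s0 else x - h j) (v j)) *
              (Lmax * |h i0 - h i|) := by rw [Finset.sum_mul]
      _ ≤ 1 * (Lmax * |h i0 - h i|) := by
          refine mul_le_mul_of_nonneg_right ?_ (by positivity)
          exact conv_aux_sum_le_one i (fun j => P j (if j ∈ S then s0 else x - h j))
            (fun j y => hnn _ _ _) (fun j => hpart _ _)
      _ = Lmax * |h i0 - h i| := one_mul _
  -- telescoping by induction
  have hind : ∀ S : Finset (Fin m), |T S - T ∅| ≤ Lmax * ∑ i ∈ S, |h i0 - h i| := by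
    intro S
    induction S using Finset.induction_on with
    | empty => simp
    | insert a S hiS ih =>
      calc |T (insert a S) - T ∅| ≤ |T (insert a S) - T S| + |T S - T ∅| := by
            have := abs_sub_le (T (insert a S)) (T S) (T ∅); linarith [this]
        _ ≤ Lmax * |h i0 - h a| + Lmax * ∑ i ∈ S, |h i0 - h i| :=
            add_le_add (hstep a S hiS) ih
        _ = Lmax * ∑ i ∈ insert a S, |h i0 - h i| := by
            rw [Finset.sum_insert hiS]; ring
  have hTuniv : T Finset.univ = ∑ v ∈ Finset.Nat.antidiagonalTuple m k,
      ∏ i, P i (x - h i0) (v i) := by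
    rw [hT]; simp [hs0]
  have hTempty : T ∅ = ∑ v ∈ Finset.Nat.antidiagonalTuple m k,
      ∏ i, P i (x - h i) (v i) := by
    rw [hT]; simp
  have hfinal := hind Finset.univ
  rw [← hTuniv, ← hTempty, abs_sub_comm]
  have hsum : ∑ i : Fin m, |h i0 - h i| = ∑ i ∈ Finset.univ.erase i0, |h i0 - h i| := by
    rw [← Finset.add_sum_erase _ _ (Finset.mem_univ i0)]
    simp
  rw [hsum] at hfinal
  exact hfinal
end

section
/- Let ξ^1,...,ξ^m be independent pure-birth processes, each starting at 0 and jumping from state j to j+1 at rate λ_j = j + 1 + δ/m, where m ∈ ℕ, m ≥ 1, δ > −m. Then for each fixed t ≥ 0, the sum ξ^1_t + ... + ξ^m_t has the same distribution as a single pure-birth process started at 0 with rates λ̄_k = k + m + δ, evaluated at time t. -/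
/-- Uniqueness for the scalar linear ODE `f' = a f + c`. -/
lemma ode_unique_aux (a : ℝ) (c f g : ℝ → ℝ) (h0 : f 0 = g 0)
    (hf : ∀ t, HasDerivAt f (a * f t + c t) t)
    (hg : ∀ t, HasDerivAt g (a * g t + c t) t) : ∀ t, f t = g t := by
  have key : ∀ s : ℝ, HasDerivAt (fun u => (f u - g u) * Real.exp (-a * u)) 0 s := by
    intro s
    have h2 : HasDerivAt (fun u : ℝ => Real.exp (-a * u)) (Real.exp (-a * s) * (-a)) s := by
      simpa [Function.comp_def] using
        (Real.hasDerivAt_exp (-a * s)).comp s ((hasDerivAt_id s).const_mul (-a))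
    have h1 := ((hf s).fun_sub (hg s)).fun_mul h2
    refine h1.congr_deriv ?_
    ring
  intro t
  have hc := is_const_of_deriv_eq_zero (f := fun u => (f u - g u) * Real.exp (-a * u))
    (fun x => (key x).differentiableAt) (fun x => (key x).deriv) t 0
  simp only [h0, sub_self, zero_mul] at hc
  have := mul_eq_zero.mp hc
  rcases this with h | h
  · linarith [sub_eq_zero.mp h]
  · exact absurd h (Real.exp_ne_zero _)

/-- The sum of `m` independent pure-birth processes with rates `λ_j = j + 1 + δ/m`
has, at each fixed time `t ≥ 0`, the same distribution as a single pure-birth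
process with rates `λ̄_k = k + m + δ`.  Distributions are encoded by their
(unique) solutions of the Kolmogorov forward equations, and the distribution of
the sum of independent variables is the convolution of the marginals. -/
theorem sum_birth_processes_distribution (m : ℕ) (hm : 1 ≤ m) (δ : ℝ) (hδ : -(m : ℝ) < δ)
    (P : Fin m → ℝ → ℕ → ℝ) (Q : ℝ → ℕ → ℝ)
    -- initial conditions: each process starts at 0
    (hP00 : ∀ i, P i 0 0 = 1) (hP0 : ∀ i k, k ≠ 0 → P i 0 k = 0)
    (hQ00 : Q 0 0 = 1) (hQ0 : ∀ k, k ≠ 0 → Q 0 k = 0)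
    -- forward equations with rates λ_j = j + 1 + δ/m for each copy
    (hPode0 : ∀ i t, HasDerivAt (fun s => P i s 0) (-(1 + δ / m) * P i t 0) t)
    (hPode : ∀ i t k, HasDerivAt (fun s => P i s (k + 1))
      (-((k : ℝ) + 1 + 1 + δ / m) * P i t (k + 1) + ((k : ℝ) + 1 + δ / m) * P i t k) t)
    -- forward equations with rates λ̄_k = k + m + δ for the combined process
    (hQode0 : ∀ t, HasDerivAt (fun s => Q s 0) (-((m : ℝ) + δ) * Q t 0) t)
    (hQode : ∀ t k, HasDerivAt (fun s => Q s (k + 1))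
      (-((k : ℝ) + 1 + m + δ) * Q t (k + 1) + ((k : ℝ) + m + δ) * Q t k) t) :
    ∀ t : ℝ, 0 ≤ t → ∀ k : ℕ,
      ∑ v ∈ Finset.Nat.antidiagonalTuple m k, ∏ i, P i t (v i) = Q t k := by
  classical
  have hm0 : (m : ℝ) ≠ 0 := by
    have : (0 : ℝ) < m := by exact_mod_cast hm
    linarith
  set R : ℝ → ℕ → ℝ := fun t n => ∑ v ∈ Finset.Nat.antidiagonalTuple m n, ∏ i, P i t (v i)
    with hR
  set G : ℝ → Fin m → ℕ → ℝ := fun t i n =>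
    match n with
    | 0 => 0
    | Nat.succ l => ((l : ℝ) + 1 + δ / m) * P i t l
    with hG
  -- per-coordinate ODE in uniform form
  have hD : ∀ (i : Fin m) (n : ℕ) (t : ℝ),
      HasDerivAt (fun s => P i s n) (-((n : ℝ) + 1 + δ / m) * P i t n + G t i n) t := by
    intro i n t
    cases n with
    | zero => simpa [hG] using hPode0 i t
    | succ l =>
      simp only [hG, Nat.cast_succ]
      exact hPode i t l
  -- common coefficient computation
  have hcoef : ∀ (n : ℕ) (v : Fin m → ℕ), v ∈ Finset.Nat.antidiagonalTuple m n →
      ∑ i : Fin m, ((v i : ℝ) + 1 + δ / m) = (n : ℝ) + m + δ := by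
    intro n v hv
    have hsum : (∑ i, (v i : ℝ)) = (n : ℝ) := by
      have := Finset.Nat.mem_antidiagonalTuple.mp hv
      exact_mod_cast congrArg (Nat.cast : ℕ → ℝ) this
    rw [Finset.sum_add_distrib, Finset.sum_add_distrib, hsum, Finset.sum_const,
      Finset.sum_const, Finset.card_univ, Fintype.card_fin, nsmul_eq_mul, nsmul_eq_mul]
    field_simp
  -- sum over coordinates of "weighted product" identities
  have hsumc : ∀ (n : ℕ) (t : ℝ) (v : Fin m → ℕ), v ∈ Finset.Nat.antidiagonalTuple m n →
      ∑ i : Fin m, (∏ j ∈ Finset.univ.erase i, P j t (v j)) *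
        (((v i : ℝ) + 1 + δ / m) * P i t (v i)) = ((n : ℝ) + m + δ) * ∏ i, P i t (v i) := by
    intro n t v hv
    calc ∑ i : Fin m, (∏ j ∈ Finset.univ.erase i, P j t (v j)) *
          (((v i : ℝ) + 1 + δ / m) * P i t (v i))
        = ∑ i : Fin m, ((v i : ℝ) + 1 + δ / m) * ∏ j, P j t (v j) := by
          refine Finset.sum_congr rfl fun i _ => ?_
          rw [← Finset.prod_erase_mul Finset.univ _ (Finset.mem_univ i)]
          ring
      _ = (∑ i : Fin m, ((v i : ℝ) + 1 + δ / m)) * ∏ j, P j t (v j) := by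
          rw [Finset.sum_mul]
      _ = _ := by rw [hcoef n v hv]
  -- derivative of R in raw form
  have hRraw : ∀ (n : ℕ) (t : ℝ),
      HasDerivAt (fun s => R s n)
        (∑ v ∈ Finset.Nat.antidiagonalTuple m n, ∑ i : Fin m,
          (∏ j ∈ Finset.univ.erase i, P j t (v j)) *
            (-((v i : ℝ) + 1 + δ / m) * P i t (v i) + G t i (v i))) t := by
    intro n t
    apply HasDerivAt.fun_sum
    intro v _
    have := HasDerivAt.fun_finset_prod (u := Finset.univ) (f := fun i s => P i s (v i))
      (f' := fun i => -((v i : ℝ) + 1 + δ / m) * P i t (v i) + G t i (v i))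
      (x := t) (fun i _ => hD i (v i) t)
    simpa [smul_eq_mul] using this
  -- split the raw derivative
  have hsplit : ∀ (n : ℕ) (t : ℝ),
      (∑ v ∈ Finset.Nat.antidiagonalTuple m n, ∑ i : Fin m,
          (∏ j ∈ Finset.univ.erase i, P j t (v j)) *
            (-((v i : ℝ) + 1 + δ / m) * P i t (v i) + G t i (v i)))
      = -((n : ℝ) + m + δ) * R t n +
        ∑ v ∈ Finset.Nat.antidiagonalTuple m n, ∑ i : Fin m,
          (∏ j ∈ Finset.univ.erase i, P j t (v j)) * G t i (v i) := by
    intro n t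
    rw [hR]
    simp only [Finset.mul_sum]
    rw [← Finset.sum_add_distrib]
    refine Finset.sum_congr rfl fun v hv => ?_
    have h1 : ∑ i : Fin m, (∏ j ∈ Finset.univ.erase i, P j t (v j)) *
        (-((v i : ℝ) + 1 + δ / m) * P i t (v i) + G t i (v i))
        = (∑ i : Fin m, (∏ j ∈ Finset.univ.erase i, P j t (v j)) *
            (((v i : ℝ) + 1 + δ / m) * P i t (v i))) * (-1) +
          ∑ i : Fin m, (∏ j ∈ Finset.univ.erase i, P j t (v j)) * G t i (v i) := by
      rw [Finset.sum_mul, ← Finset.sum_add_distrib]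
      refine Finset.sum_congr rfl fun i _ => ?_
      ring
    rw [h1, hsumc n t v hv]
    ring
  -- the shift identity for the G-part
  have hshift : ∀ (n : ℕ) (t : ℝ),
      ∑ v ∈ Finset.Nat.antidiagonalTuple m (n + 1), ∑ i : Fin m,
          (∏ j ∈ Finset.univ.erase i, P j t (v j)) * G t i (v i)
      = ∑ w ∈ Finset.Nat.antidiagonalTuple m n, ∑ i : Fin m,
          (∏ j ∈ Finset.univ.erase i, P j t (w j)) *
            (((w i : ℝ) + 1 + δ / m) * P i t (w i)) := by
    intro n t
    rw [Finset.sum_comm, Finset.sum_comm (s := Finset.Nat.antidiagonalTuple m n)]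
    refine Finset.sum_congr rfl fun i _ => ?_
    have hfilter : ∑ v ∈ Finset.Nat.antidiagonalTuple m (n + 1),
        (∏ j ∈ Finset.univ.erase i, P j t (v j)) * G t i (v i)
        = ∑ v ∈ (Finset.Nat.antidiagonalTuple m (n + 1)).filter (fun v => v i ≠ 0),
            (∏ j ∈ Finset.univ.erase i, P j t (v j)) * G t i (v i) := by
      refine (Finset.sum_filter_of_ne ?_).symm
      intro v _ hne h
      exact hne (by rw [h]; simp [hG])
    rw [hfilter]
    refine Finset.sum_bij' (fun v _ => Function.update v i (v i - 1))
      (fun w _ => Function.update w i (w i + 1)) ?_ ?_ ?_ ?_ ?_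
    · -- maps into antidiagonalTuple m n
      intro v hv
      rw [Finset.mem_filter] at hv
      obtain ⟨hv1, hv2⟩ := hv
      rw [Finset.Nat.mem_antidiagonalTuple] at hv1 ⊢
      rw [Finset.sum_update_of_mem (Finset.mem_univ i), Finset.sdiff_singleton_eq_erase]
      rw [← Finset.add_sum_erase _ v (Finset.mem_univ i)] at hv1
      omega
    · -- maps back into the filter
      intro w hw
      rw [Finset.Nat.mem_antidiagonalTuple] at hw
      rw [Finset.mem_filter, Finset.Nat.mem_antidiagonalTuple]
      constructor
      · rw [Finset.sum_update_of_mem (Finset.mem_univ i), Finset.sdiff_singleton_eq_erase]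
        rw [← Finset.add_sum_erase _ w (Finset.mem_univ i)] at hw
        omega
      · simp
    · -- left inverse
      intro v hv
      rw [Finset.mem_filter] at hv
      funext j
      by_cases hj : j = i
      · subst hj
        simp [Function.update_self]
        omega
      · simp [Function.update_of_ne hj]
    · -- right inverse
      intro w _
      funext j
      by_cases hj : j = i
      · subst hj
        simp [Function.update_self]
      · simp [Function.update_of_ne hj]
    · -- values agree
      intro v hv
      rw [Finset.mem_filter] at hv
      obtain ⟨_, hvi⟩ := hv
      obtain ⟨l, hl⟩ : ∃ l, v i = l + 1 := ⟨v i - 1, by omega⟩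
      have hprod : ∏ j ∈ Finset.univ.erase i, P j t (Function.update v i l j)
          = ∏ j ∈ Finset.univ.erase i, P j t (v j) := by
        refine Finset.prod_congr rfl fun j hj => ?_
        rw [Function.update_of_ne (Finset.ne_of_mem_erase hj)]
      simp only [Function.update_self, hprod, hl, Nat.add_sub_cancel, hG]
      try push_cast
      try ring
  -- derivative of R at level 0
  have hRd0 : ∀ t, HasDerivAt (fun s => R s 0) (-((m : ℝ) + δ) * R t 0) t := by
    intro t
    have := hRraw 0 t
    rw [hsplit 0 t] at this
    have hz : ∑ v ∈ Finset.Nat.antidiagonalTuple m 0, ∑ i : Fin m,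
        (∏ j ∈ Finset.univ.erase i, P j t (v j)) * G t i (v i) = 0 := by
      rw [Finset.Nat.antidiagonalTuple_zero_right]
      simp [hG]
    rw [hz] at this
    simpa using this
  -- derivative of R at level n+1
  have hRd : ∀ (n : ℕ) (t : ℝ), HasDerivAt (fun s => R s (n + 1))
      (-((n : ℝ) + 1 + m + δ) * R t (n + 1) + ((n : ℝ) + m + δ) * R t n) t := by
    intro n t
    have := hRraw (n + 1) t
    rw [hsplit (n + 1) t, hshift n t] at this
    have h2 : ∑ w ∈ Finset.Nat.antidiagonalTuple m n, ∑ i : Fin m,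
        (∏ j ∈ Finset.univ.erase i, P j t (w j)) * (((w i : ℝ) + 1 + δ / m) * P i t (w i))
        = ((n : ℝ) + m + δ) * R t n := by
      rw [hR]
      rw [Finset.mul_sum]
      exact Finset.sum_congr rfl fun w hw => hsumc n t w hw
    rw [h2] at this
    convert this using 2
    push_cast
    ring
  -- main induction
  have main : ∀ (k : ℕ) (t : ℝ), R t k = Q t k := by
    intro k
    induction k with
    | zero =>
      have h0 : R 0 0 = Q 0 0 := by
        simp only [hR, hQ00, Finset.Nat.antidiagonalTuple_zero_right, Finset.sum_singleton]
        simp [hP00]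
      have hf : ∀ t, HasDerivAt (fun t => R t 0)
          (-((m : ℝ) + δ) * R t 0 + (fun _ : ℝ => (0 : ℝ)) t) t := by
        intro t
        simpa using hRd0 t
      have hg : ∀ t, HasDerivAt (fun t => Q t 0)
          (-((m : ℝ) + δ) * Q t 0 + (fun _ : ℝ => (0 : ℝ)) t) t := by
        intro t
        simpa using hQode0 t
      exact ode_unique_aux _ _ _ _ h0 hf hg
    | succ k ih =>
      have h0 : R 0 (k + 1) = Q 0 (k + 1) := by
        rw [hQ0 (k + 1) (Nat.succ_ne_zero k)]
        simp only [hR]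
        refine Finset.sum_eq_zero fun v hv => ?_
        have hsum : ∑ i, v i = k + 1 := Finset.Nat.mem_antidiagonalTuple.mp hv
        have : ∃ i, v i ≠ 0 := by
          by_contra h
          push_neg at h
          simp [h] at hsum
        obtain ⟨i, hi⟩ := this
        exact Finset.prod_eq_zero (Finset.mem_univ i) (hP0 i (v i) hi)
      have hf : ∀ t, HasDerivAt (fun t => R t (k + 1))
          (-((k : ℝ) + 1 + m + δ) * R t (k + 1) + ((k : ℝ) + m + δ) * Q t k) t := by
        intro t
        rw [← ih t]
        exact hRd k t
      exact ode_unique_aux (-((k : ℝ) + 1 + m + δ)) (fun t => ((k : ℝ) + m + δ) * Q t k)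
        _ _ h0 hf (fun t => hQode t k)
  intro t _ k
  exact main k t
end
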